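/- With V, α_s, α_s^∨ as in the standing assumptions and R = Sym(V), for any s ∈ S and any δ_s ∈ V with ⟨α_s^∨, δ_s⟩ = 1, we have R = R^s ⊕ δ_s·R^s, where R^s denotes the subring of s-invariant elements of R. -/
import Mathlib


/-- The embedding of `V = K^n` as the degree-one part of `R = Sym(V) = K[X₁,…,Xₙ]`. -/
noncomputable def linP {K : Type} [CommRing K] {n : ℕ} (v : Fin n → K) :
    MvPolynomial (Fin n) K :=
  ∑ i, MvPolynomial.C (v i) * MvPolynomial.X i

/-- The extension of the `W`-action on `V` to `R = Sym(V)` by algebra maps. -/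
noncomputable def actR {K W : Type} [CommRing K] [Group W] {n : ℕ}
    (π : Representation K W (Fin n → K)) (w : W) :
    MvPolynomial (Fin n) K →ₐ[K] MvPolynomial (Fin n) K :=
  MvPolynomial.aeval fun i => linP (π w (Pi.single i 1))

namespace Aux
open MvPolynomial

variable {K : Type} [CommRing K] {n : ℕ}

theorem linP_add (v w : Fin n → K) : linP (v + w) = linP v + linP w := by
  simp [linP, add_mul, Finset.sum_add_distrib]

theorem linP_smul (a : K) (v : Fin n → K) : linP (a • v) = C a * linP v := by
  simp [linP, Finset.mul_sum, mul_assoc]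

noncomputable def linPL (K : Type) [CommRing K] (n : ℕ) :
    (Fin n → K) →ₗ[K] MvPolynomial (Fin n) K where
  toFun := linP
  map_add' := linP_add
  map_smul' := fun a v => by simpa [MvPolynomial.smul_eq_C_mul] using linP_smul a v

theorem linP_sub (v w : Fin n → K) : linP (v - w) = linP v - linP w :=
  map_sub (linPL K n) v w

theorem linP_neg (v : Fin n → K) : linP (-v) = - linP v :=
  map_neg (linPL K n) v

theorem linP_single (j : Fin n) : linP (Pi.single j (1:K)) = X j := by
  simp [linP, Pi.single_apply]

theorem coeff_linP (v : Fin n → K) (j : Fin n) :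
    coeff (Finsupp.single j 1) (linP v) = v j := by
  simp [linP, coeff_sum, coeff_X', Finsupp.single_left_inj (one_ne_zero (α := ℕ))]

theorem linP_ne_zero {v : Fin n → K} (hv : v ≠ 0) : linP v ≠ 0 := by
  obtain ⟨j, hj⟩ := Function.ne_iff.mp hv
  intro h
  apply hj
  have := coeff_linP v j
  rw [h] at this
  simpa using this.symm

theorem actR_linP {W : Type} [Group W] (π : Representation K W (Fin n → K))
    (w : W) (v : Fin n → K) : actR π w (linP v) = linP (π w v) := by
  conv_lhs => rw [← Finset.univ_sum_single v]
  conv_rhs => rw [← Finset.univ_sum_single v]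
  have h1 : ∀ j : Fin n, (Pi.single j (v j) : Fin n → K) = v j • (Pi.single j (1:K) : Fin n → K) := by
    intro j; rw [← Pi.single_smul, smul_eq_mul, mul_one]
  have lsum : ∀ (g : Fin n → (Fin n → K)), linP (∑ j, g j) = ∑ j, linP (g j) :=
    fun g => map_sum (linPL K n) g Finset.univ
  simp only [h1, map_sum, LinearMap.map_smul, lsum, linP_smul, linP_single]
  refine Finset.sum_congr rfl fun j _ => ?_
  rw [map_mul]
  congr 1
  · simp [actR]
  · simp [actR]

end Aux

open MvPolynomial Aux in
/-- With `R = Sym(V)` and `δ_s ∈ V` such that `⟨α_s^∨, δ_s⟩ = 1`, we have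
`R = R^s ⊕ δ_s·R^s`: every `f ∈ R` is uniquely `f = g + δ_s·h` with `g, h` `s`-invariant. -/
theorem statement1 {B W : Type} [Group W] [Finite B] {M : CoxeterMatrix B}
    (cs : CoxeterSystem M W)
    (K : Type) [CommRing K] [IsDomain K] [IsNoetherianRing K] (n : ℕ)
    (π : Representation K W (Fin n → K))
    (α : B → (Fin n → K)) (cα : B → ((Fin n → K) →ₗ[K] K))
    (h2 : ∀ i : B, cα i (α i) = 2)
    (hrefl : ∀ (i : B) (v : Fin n → K), π (cs.simple i) v = v - cα i v • α i)
    (hsurj : ∀ i : B, Function.Surjective (cα i))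
    (hne : ∀ i : B, α i ≠ 0)
    (i : B) (δ : Fin n → K) (hδ : cα i δ = 1)
    (f : MvPolynomial (Fin n) K) :
    ∃! p : MvPolynomial (Fin n) K × MvPolynomial (Fin n) K,
      actR π (cs.simple i) p.1 = p.1 ∧ actR π (cs.simple i) p.2 = p.2 ∧
        f = p.1 + linP δ * p.2 := by
  set s := cs.simple i with hs
  set t : MvPolynomial (Fin n) K := linP δ with ht
  set a : MvPolynomial (Fin n) K := linP (α i) with haa
  set c : MvPolynomial (Fin n) K := linP ((2:K) • δ - α i) with hc
  have hσlin : ∀ v : Fin n → K, actR π s (linP v) = linP (v - cα i v • α i) := by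
    intro v; rw [actR_linP, hrefl]
  have hfix : ∀ v : Fin n → K, cα i v = 0 → actR π s (linP v) = linP v := by
    intro v hv; rw [hσlin, hv, zero_smul, sub_zero]
  have hσt : actR π s t = t - a := by
    rw [ht, hσlin, hδ, one_smul, linP_sub]
  have hσa : actR π s a = -a := by
    rw [haa, hσlin, h2]
    have : α i - (2:K) • α i = -(α i) := by
      rw [two_smul]; abel
    rw [this, linP_neg]
  set e : MvPolynomial (Fin n) K := t * (t - a) with he
  have hσe : actR π s e = e := by
    rw [he, map_mul, map_sub, hσt, hσa]; ring
  have hσc : actR π s c = c := by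
    refine hfix _ ?_
    rw [map_sub, LinearMap.map_smul, hδ, h2, smul_eq_mul, mul_one, sub_self]
  have hca : c + a = C 2 * t := by
    rw [hc, haa, ← linP_add, sub_add_cancel, ← linP_smul]
  have hsq : t * t = c * t - e := by
    rw [he]
    have h2t : (C 2 : MvPolynomial (Fin n) K) = 2 := by
      rw [map_ofNat]
    rw [h2t] at hca
    linear_combination (-t) * hca
  set σ := actR π s with hσ
  set P : MvPolynomial (Fin n) K → Prop :=
    fun q => ∃ g h, σ g = g ∧ σ h = h ∧ q = g + t * h with hP
  have hσC : ∀ k : K, σ (C k) = C k := by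
    intro k
    rw [hσ, actR]
    simp [MvPolynomial.algebraMap_eq]
  have hmul : ∀ q1 q2, P q1 → P q2 → P (q1 * q2) := by
    rintro q1 q2 ⟨g1, h1, hg1, hh1, rfl⟩ ⟨g2, h2', hg2, hh2, rfl⟩
    refine ⟨g1 * g2 - e * (h1 * h2'), g1 * h2' + g2 * h1 + c * (h1 * h2'), ?_, ?_, ?_⟩
    · rw [map_sub, map_mul σ g1 g2, map_mul σ e (h1 * h2'), map_mul σ h1 h2',
        hσe, hg1, hg2, hh1, hh2]
    · rw [map_add, map_add, map_mul σ g1 h2', map_mul σ g2 h1,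
        map_mul σ c (h1 * h2'), map_mul σ h1 h2', hσc, hg1, hg2, hh1, hh2]
    · linear_combination h1 * h2' * hsq
  have hCp : ∀ k : K, P (C k) := by
    intro k; exact ⟨C k, 0, hσC k, by rw [map_zero], by ring⟩
  have hXp : ∀ j : Fin n, P (X j) := by
    intro j
    refine ⟨linP (Pi.single j 1 - cα i (Pi.single j 1) • δ), C (cα i (Pi.single j 1)),
      ?_, hσC _, ?_⟩
    · refine hfix _ ?_
      rw [map_sub, LinearMap.map_smul, hδ, smul_eq_mul, mul_one, sub_self]
    · rw [← linP_single j]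
      conv_lhs => rw [show (Pi.single j 1 : Fin n → K) =
        (Pi.single j 1 - cα i (Pi.single j 1) • δ) + cα i (Pi.single j 1) • δ by abel]
      rw [linP_add, linP_smul]
      ring
  have hex : P f := by
    induction f using MvPolynomial.induction_on with
    | C k => exact hCp k
    | add p q hp hq =>
      obtain ⟨g1, h1, hg1, hh1, rfl⟩ := hp
      obtain ⟨g2, h2', hg2, hh2, rfl⟩ := hq
      exact ⟨g1 + g2, h1 + h2', by rw [map_add, hg1, hg2],
        by rw [map_add, hh1, hh2], by ring⟩
    | mul_X p j hp => exact hmul _ _ hp (hXp j)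
  obtain ⟨g, h, hg, hh, hf⟩ := hex
  have hane : a ≠ 0 := linP_ne_zero (hne i)
  refine ⟨(g, h), ⟨hg, hh, hf⟩, ?_⟩
  rintro ⟨g', h'⟩ ⟨hg', hh', hf'⟩
  have e1 : g' + t * h' = g + t * h := by rw [← hf', ← hf]
  have e2 : g' + (t - a) * h' = g + (t - a) * h := by
    have := congrArg σ e1
    rwa [map_add, map_add, map_mul, map_mul, hσt, hg, hh, hg', hh'] at this
  have e3 : a * (h' - h) = 0 := by linear_combination e1 - e2
  have e4 : h' = h := by
    rcases mul_eq_zero.mp e3 with h0 | h0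
    · exact absurd h0 hane
    · exact sub_eq_zero.mp h0
  have e5 : g' = g := by
    rw [e4] at e1
    exact add_right_cancel e1
  exact Prod.ext e5 e4
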